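/- Let $(C,P)$ be a Dorroh pair of coalgebras with $C$ counital, and suppose $T$ is a subcoalgebra of $C\ltimes_d P$. Define $E=\{c\in C:(c,0)\in T\}$, $D=\pi_C(T)$, $R=\{p\in P:(0,p)\in T\}$, $Q=\pi_P(T)$. Then $(E,R)=\{(c,p):c\in E,p\in R\}$ is a coideal of the coalgebra $T$, and $T/(E,R)\cong D/E$ as coalgebras, the isomorphism induced by $(c,p)\mapsto c+E$. -/

import Mathlib

open TensorProduct
section Aux
variable {k : Type*} [Field k] {M N M' N' Q : Type*} [AddCommGroup M] [Module k M]
  [AddCommGroup N] [Module k N] [AddCommGroup M'] [Module k M'] [AddCommGroup N'] [Module k N']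
  [AddCommGroup Q] [Module k Q]

lemma auxMapInj (f : M →ₗ[k] M') (g : N →ₗ[k] N')
    (hf : Function.Injective f) (hg : Function.Injective g) :
    Function.Injective (TensorProduct.map f g) := by
  rw [← LinearMap.lTensor_comp_rTensor, LinearMap.coe_comp]
  exact (Module.Flat.lTensor_preserves_injective_linearMap g hg).comp
    (Module.Flat.rTensor_preserves_injective_linearMap f hf)

lemma auxKer (g : M →ₗ[k] N) (x : Q ⊗[k] M) (hx : g.lTensor Q x = 0) :
    ∃ y : Q ⊗[k] ↥(LinearMap.ker g), (LinearMap.ker g).subtype.lTensor Q y = x :=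
  (Module.Flat.lTensor_exact Q (LinearMap.exact_subtype_ker_map g) x).mp hx
end Aux
set_option maxHeartbeats 2000000
set_option synthInstance.maxHeartbeats 400000


open TensorProduct

/-- Coassociativity of a (not necessarily counital) comultiplication. -/
def Coassoc {k : Type*} [Field k] {V : Type*} [AddCommGroup V] [Module k V]
    (d : V →ₗ[k] V ⊗[k] V) : Prop :=
  (TensorProduct.assoc k V V V).toLinearMap ∘ₗ TensorProduct.map d LinearMap.id ∘ₗ d
    = TensorProduct.map LinearMap.id d ∘ₗ d

/-- The Dorroh comultiplication on `H × I` for a Dorroh pair of coalgebras `(H, I)`. -/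
noncomputable def dorrohComul {k : Type*} [Field k] {H I : Type*} [AddCommGroup H] [Module k H]
    [AddCommGroup I] [Module k I]
    (dH : H →ₗ[k] H ⊗[k] H) (dI : I →ₗ[k] I ⊗[k] I)
    (ρl : I →ₗ[k] H ⊗[k] I) (ρr : I →ₗ[k] I ⊗[k] H) :
    (H × I) →ₗ[k] (H × I) ⊗[k] (H × I) :=
  TensorProduct.map (LinearMap.inl k H I) (LinearMap.inl k H I) ∘ₗ dH ∘ₗ LinearMap.fst k H I
  + TensorProduct.map (LinearMap.inl k H I) (LinearMap.inr k H I) ∘ₗ ρl ∘ₗ LinearMap.snd k H I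
  + TensorProduct.map (LinearMap.inr k H I) (LinearMap.inl k H I) ∘ₗ ρr ∘ₗ LinearMap.snd k H I
  + TensorProduct.map (LinearMap.inr k H I) (LinearMap.inr k H I) ∘ₗ dI ∘ₗ LinearMap.snd k H I


theorem stmt14 {k : Type*} [Field k] {C P : Type*} [AddCommGroup C] [Module k C]
    [AddCommGroup P] [Module k P]
    (dC : C →ₗ[k] C ⊗[k] C) (dP : P →ₗ[k] P ⊗[k] P)
    (ρl : P →ₗ[k] C ⊗[k] P) (ρr : P →ₗ[k] P ⊗[k] C)
    (hC : Coassoc dC) (hP : Coassoc dP)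
    -- `C` is counital with counit `εC`
    (εC : C →ₗ[k] k)
    (hcounit : ∀ c : C,
      (TensorProduct.lid k C) (TensorProduct.map εC LinearMap.id (dC c)) = c ∧
      (TensorProduct.rid k C) (TensorProduct.map LinearMap.id εC (dC c)) = c)
    (hl : (TensorProduct.assoc k C C P).toLinearMap ∘ₗ TensorProduct.map dC LinearMap.id ∘ₗ ρl
      = TensorProduct.map LinearMap.id ρl ∘ₗ ρl)
    (hr : TensorProduct.map LinearMap.id dC ∘ₗ ρr
      = (TensorProduct.assoc k P C C).toLinearMap ∘ₗ TensorProduct.map ρr LinearMap.id ∘ₗ ρr)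
    (hbi : TensorProduct.map LinearMap.id ρr ∘ₗ ρl
      = (TensorProduct.assoc k C P C).toLinearMap ∘ₗ TensorProduct.map ρl LinearMap.id ∘ₗ ρr)
    (c1 : TensorProduct.map LinearMap.id ρr ∘ₗ dP
      = (TensorProduct.assoc k P P C).toLinearMap ∘ₗ TensorProduct.map dP LinearMap.id ∘ₗ ρr)
    (c2 : (TensorProduct.assoc k C P P).toLinearMap ∘ₗ TensorProduct.map ρl LinearMap.id ∘ₗ dP
      = TensorProduct.map LinearMap.id dP ∘ₗ ρl)
    (c3 : (TensorProduct.assoc k P C P).toLinearMap ∘ₗ TensorProduct.map ρr LinearMap.id ∘ₗ dP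
      = TensorProduct.map LinearMap.id ρl ∘ₗ dP)
    -- `T` is a subcoalgebra of `C ⋉ P`
    (T : Submodule k (C × P))
    (hT : ∀ t ∈ T, dorrohComul dC dP ρl ρr t ∈
      LinearMap.range (TensorProduct.map T.subtype T.subtype)) :
    -- with `E = {c | (c,0) ∈ T}`, `D = π_C(T)`, `R = {p | (0,p) ∈ T}`:
    -- `T` carries a (unique) coalgebra structure `dT` restricting `Δ`,
    ∃ dT : ↥T →ₗ[k] ↥T ⊗[k] ↥T,
      TensorProduct.map T.subtype T.subtype ∘ₗ dT = dorrohComul dC dP ρl ρr ∘ₗ T.subtype ∧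
      -- `(E,R)` is a coideal of the coalgebra `T`
      (∀ t : ↥T, (↑t : C × P) ∈ Submodule.prod (Submodule.comap (LinearMap.inl k C P) T)
          (Submodule.comap (LinearMap.inr k C P) T) →
        dT t ∈
          LinearMap.range (TensorProduct.map
            (Submodule.comap T.subtype (Submodule.prod (Submodule.comap (LinearMap.inl k C P) T)
              (Submodule.comap (LinearMap.inr k C P) T))).subtype
            (LinearMap.id (R := k) (M := ↥T)))
          ⊔ LinearMap.range (TensorProduct.map (LinearMap.id (R := k) (M := ↥T))
            (Submodule.comap T.subtype (Submodule.prod (Submodule.comap (LinearMap.inl k C P) T)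
              (Submodule.comap (LinearMap.inr k C P) T))).subtype)) ∧
      -- `D/E` (inside `C/E`) carries the quotient coalgebra structure `dQ`
      ∃ dQ : (C ⧸ Submodule.comap (LinearMap.inl k C P) T) →ₗ[k]
          (C ⧸ Submodule.comap (LinearMap.inl k C P) T) ⊗[k]
          (C ⧸ Submodule.comap (LinearMap.inl k C P) T),
        dQ ∘ₗ (Submodule.comap (LinearMap.inl k C P) T).mkQ
          = TensorProduct.map (Submodule.comap (LinearMap.inl k C P) T).mkQ
              (Submodule.comap (LinearMap.inl k C P) T).mkQ ∘ₗ dC ∧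
        -- the map `θ : T → C/E`, `(c,p) ↦ c + E`, has kernel `(E,R)`, image `D/E`,
        -- and is a coalgebra homomorphism; hence `T/(E,R) ≅ D/E` as coalgebras
        (let θ : ↥T →ₗ[k] C ⧸ Submodule.comap (LinearMap.inl k C P) T :=
          (Submodule.comap (LinearMap.inl k C P) T).mkQ ∘ₗ LinearMap.fst k C P ∘ₗ T.subtype
        LinearMap.ker θ = Submodule.comap T.subtype
            (Submodule.prod (Submodule.comap (LinearMap.inl k C P) T)
              (Submodule.comap (LinearMap.inr k C P) T)) ∧
        LinearMap.range θ = Submodule.map (Submodule.comap (LinearMap.inl k C P) T).mkQ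
            (Submodule.map (LinearMap.fst k C P) T) ∧
        dQ ∘ₗ θ = TensorProduct.map θ θ ∘ₗ dT) := by
  classical
  set E : Submodule k C := Submodule.comap (LinearMap.inl k C P) T with hEdef
  set R : Submodule k P := Submodule.comap (LinearMap.inr k C P) T with hRdef
  set KK : Submodule k ↥T := Submodule.comap T.subtype (E.prod R) with hKKdef
  set Δ : (C × P) →ₗ[k] (C × P) ⊗[k] (C × P) := dorrohComul dC dP ρl ρr with hΔdef
  have hmapinj : Function.Injective (TensorProduct.map T.subtype T.subtype) :=
    auxMapInj _ _ T.injective_subtype T.injective_subtype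
  -- the comultiplication on T
  set g : ↥T →ₗ[k] ↥(LinearMap.range (TensorProduct.map T.subtype T.subtype)) :=
    LinearMap.codRestrict _ (Δ ∘ₗ T.subtype) (fun t => hT t t.2) with hgdef
  set e := LinearEquiv.ofInjective (TensorProduct.map T.subtype T.subtype) hmapinj with hedef
  set dT : ↥T →ₗ[k] ↥T ⊗[k] ↥T := e.symm.toLinearMap ∘ₗ g with hdTdef
  have hdT : TensorProduct.map T.subtype T.subtype ∘ₗ dT = Δ ∘ₗ T.subtype := by
    apply LinearMap.ext; intro t
    show TensorProduct.map T.subtype T.subtype (e.symm (g t)) = Δ (T.subtype t)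
    rw [hedef, LinearEquiv.ofInjective_symm_apply]
    rfl
  have hdTapp : ∀ t : ↥T, TensorProduct.map T.subtype T.subtype (dT t) = Δ (t : C × P) :=
    fun t => LinearMap.congr_fun hdT t
  -- value of Δ at (c, 0)
  have hΔinl : ∀ c : C, Δ ((c, 0) : C × P)
      = TensorProduct.map (LinearMap.inl k C P) (LinearMap.inl k C P) (dC c) := by
    intro c
    simp [hΔdef, dorrohComul]
  -- key lemma: dC maps E into C ⊗ E
  have hEco : ∀ c ∈ E, ∃ y : C ⊗[k] ↥E, (E.subtype.lTensor C) y = dC c := by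
    intro c hc
    have hc0 : ((c, 0) : C × P) ∈ T := hc
    obtain ⟨w, hw⟩ := hT _ hc0
    rw [hΔinl c] at hw
    set fι : ↥T →ₗ[k] C := LinearMap.fst k C P ∘ₗ T.subtype with hfι
    set sι : ↥T →ₗ[k] P := LinearMap.snd k C P ∘ₗ T.subtype with hsι
    set x : C ⊗[k] ↥T := (fι.rTensor ↥T) w with hx
    have h0 : sι.lTensor C x = 0 := by
      rw [hx, ← LinearMap.comp_apply, LinearMap.lTensor_comp_rTensor]
      have h : TensorProduct.map fι sι w
          = TensorProduct.map (LinearMap.fst k C P) (LinearMap.snd k C P)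
              (TensorProduct.map T.subtype T.subtype w) := by
        rw [← LinearMap.comp_apply, ← TensorProduct.map_comp]
      rw [h, hw, ← LinearMap.comp_apply, ← TensorProduct.map_comp]
      have h2 : (LinearMap.snd k C P) ∘ₗ (LinearMap.inl k C P) = 0 := by ext; rfl
      rw [h2, TensorProduct.map_zero_right, LinearMap.zero_apply]
    obtain ⟨y', hy'⟩ := auxKer sι x h0
    -- the map from ker sι to E
    have hmem : ∀ s : ↥(LinearMap.ker sι), fι s.1 ∈ E := by
      rintro ⟨s, hs⟩
      have hs' : (LinearMap.snd k C P) (T.subtype s) = 0 := hs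
      have heq : (LinearMap.inl k C P) (fι s) = T.subtype s := by
        apply Prod.ext
        · rfl
        · exact hs'.symm
      show (LinearMap.inl k C P) (fι s) ∈ T
      rw [heq]; exact s.2
    set j : ↥(LinearMap.ker sι) →ₗ[k] ↥E :=
      LinearMap.codRestrict E (fι ∘ₗ (LinearMap.ker sι).subtype) (fun s => hmem s) with hj
    refine ⟨j.lTensor C y', ?_⟩
    have hcomp : E.subtype ∘ₗ j = fι ∘ₗ (LinearMap.ker sι).subtype := rfl
    rw [← LinearMap.comp_apply, ← LinearMap.lTensor_comp, hcomp, LinearMap.lTensor_comp,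
      LinearMap.comp_apply, hy', hx, ← LinearMap.comp_apply, LinearMap.lTensor_comp_rTensor]
    have h : TensorProduct.map fι fι w
        = TensorProduct.map (LinearMap.fst k C P) (LinearMap.fst k C P)
            (TensorProduct.map T.subtype T.subtype w) := by
      rw [← LinearMap.comp_apply, ← TensorProduct.map_comp]
    rw [h, hw, ← LinearMap.comp_apply, ← TensorProduct.map_comp]
    have h1 : (LinearMap.fst k C P) ∘ₗ (LinearMap.inl k C P) = LinearMap.id := by ext; rfl
    rw [h1, TensorProduct.map_id, LinearMap.id_apply]
  -- E is in the kernel of (mkQ ⊗ mkQ) ∘ dC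
  have hker : E ≤ LinearMap.ker (TensorProduct.map E.mkQ E.mkQ ∘ₗ dC) := by
    intro c hc
    obtain ⟨y, hy⟩ := hEco c hc
    show TensorProduct.map E.mkQ E.mkQ (dC c) = 0
    rw [← hy, ← LinearMap.comp_apply]
    have h : TensorProduct.map E.mkQ E.mkQ ∘ₗ E.subtype.lTensor C
        = TensorProduct.map E.mkQ (E.mkQ ∘ₗ E.subtype) := by
      rw [LinearMap.lTensor, ← TensorProduct.map_comp, LinearMap.comp_id]
    have h0 : E.mkQ ∘ₗ E.subtype = 0 := by
      apply LinearMap.ext; intro x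
      exact (Submodule.Quotient.mk_eq_zero _).2 x.2
    rw [h, h0, TensorProduct.map_zero_right, LinearMap.zero_apply]
  set dQ := E.liftQ (TensorProduct.map E.mkQ E.mkQ ∘ₗ dC) hker with hdQdef
  have hdQ : dQ ∘ₗ E.mkQ = TensorProduct.map E.mkQ E.mkQ ∘ₗ dC := E.liftQ_mkQ _ _
  -- θ and its properties
  set θ : ↥T →ₗ[k] C ⧸ E := E.mkQ ∘ₗ LinearMap.fst k C P ∘ₗ T.subtype with hθdef
  have hkerθ : LinearMap.ker θ = KK := by
    apply le_antisymm
    · intro t ht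
      have h1 : ((t : C × P).1 : C) ∈ E := by
        have h := ht
        rwa [LinearMap.mem_ker, hθdef, LinearMap.comp_apply, LinearMap.comp_apply,
          Submodule.mkQ_apply, Submodule.Quotient.mk_eq_zero] at h
      have h2 : ((t : C × P).2 : P) ∈ R := by
        show (LinearMap.inr k C P) (t : C × P).2 ∈ T
        have heq : (LinearMap.inr k C P) (t : C × P).2
            = (t : C × P) - (LinearMap.inl k C P) (t : C × P).1 := by
          apply Prod.ext <;> simp
        rw [heq]
        exact T.sub_mem t.2 h1
      exact ⟨h1, h2⟩
    · intro t ht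
      rw [LinearMap.mem_ker, hθdef, LinearMap.comp_apply, LinearMap.comp_apply,
        Submodule.mkQ_apply, Submodule.Quotient.mk_eq_zero]
      exact ht.1
  -- θ is a coalgebra morphism
  set θb : (C × P) →ₗ[k] C ⧸ E := E.mkQ ∘ₗ LinearMap.fst k C P with hθbdef
  have hbinl : θb ∘ₗ LinearMap.inl k C P = E.mkQ := by apply LinearMap.ext; intro c; rfl
  have hbinr : θb ∘ₗ LinearMap.inr k C P = 0 := by
    apply LinearMap.ext; intro p
    show E.mkQ (((0 : C), p).1) = 0
    exact map_zero E.mkQ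
  have e1 : ∀ z : C ⊗[k] C, TensorProduct.map θb θb
      (TensorProduct.map (LinearMap.inl k C P) (LinearMap.inl k C P) z)
      = TensorProduct.map E.mkQ E.mkQ z := by
    intro z; rw [← LinearMap.comp_apply, ← TensorProduct.map_comp, hbinl]
  have e2 : ∀ z : C ⊗[k] P, TensorProduct.map θb θb
      (TensorProduct.map (LinearMap.inl k C P) (LinearMap.inr k C P) z) = 0 := by
    intro z
    rw [← LinearMap.comp_apply, ← TensorProduct.map_comp, hbinr,
      TensorProduct.map_zero_right, LinearMap.zero_apply]
  have e3 : ∀ z : P ⊗[k] C, TensorProduct.map θb θb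
      (TensorProduct.map (LinearMap.inr k C P) (LinearMap.inl k C P) z) = 0 := by
    intro z
    rw [← LinearMap.comp_apply, ← TensorProduct.map_comp, hbinr,
      TensorProduct.map_zero_left, LinearMap.zero_apply]
  have e4 : ∀ z : P ⊗[k] P, TensorProduct.map θb θb
      (TensorProduct.map (LinearMap.inr k C P) (LinearMap.inr k C P) z) = 0 := by
    intro z
    rw [← LinearMap.comp_apply, ← TensorProduct.map_comp, hbinr,
      TensorProduct.map_zero_left, LinearMap.zero_apply]
  have hθcoalg : dQ ∘ₗ θ = TensorProduct.map θ θ ∘ₗ dT := by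
    apply LinearMap.ext; intro t
    have hcm : TensorProduct.map θb θb ∘ₗ TensorProduct.map T.subtype T.subtype
        = TensorProduct.map θ θ := by
      rw [← TensorProduct.map_comp]; rfl
    have hR : TensorProduct.map θ θ (dT t)
        = TensorProduct.map θb θb (TensorProduct.map T.subtype T.subtype (dT t)) := by
      rw [← hcm]; rfl
    have hL : dQ (θ t) = TensorProduct.map E.mkQ E.mkQ (dC (t : C × P).1) := by
      show (dQ ∘ₗ E.mkQ) ((t : C × P).1) = _
      rw [hdQ]; rfl
    show dQ (θ t) = TensorProduct.map θ θ (dT t)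
    rw [hL, hR, hdTapp t, hΔdef]
    show _ = TensorProduct.map θb θb ((dorrohComul dC dP ρl ρr) (t : C × P))
    simp only [dorrohComul, LinearMap.add_apply, LinearMap.comp_apply,
      LinearMap.fst_apply, LinearMap.snd_apply, map_add]
    rw [e1, e2, e3, e4, add_zero, add_zero, add_zero]
  have hrangeθ : LinearMap.range θ
      = Submodule.map E.mkQ (Submodule.map (LinearMap.fst k C P) T) := by
    rw [hθdef, LinearMap.range_comp, LinearMap.range_comp, Submodule.range_subtype]
  -- the coideal property
  have hcoideal : ∀ t : ↥T, (↑t : C × P) ∈ E.prod R →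
      dT t ∈ LinearMap.range (TensorProduct.map KK.subtype (LinearMap.id (R := k) (M := ↥T)))
        ⊔ LinearMap.range (TensorProduct.map (LinearMap.id (R := k) (M := ↥T)) KK.subtype) := by
    intro t ht
    have htk : t ∈ KK := ht
    have hx0 : TensorProduct.map θ θ (dT t) = 0 := by
      rw [← LinearMap.comp_apply, ← hθcoalg, LinearMap.comp_apply]
      have h : θ t = 0 := by rw [← LinearMap.mem_ker, hkerθ]; exact htk
      rw [h, map_zero]
    obtain ⟨W, hW⟩ := Submodule.exists_isCompl KK
    set π' := Submodule.linearProjOfIsCompl W KK hW.symm with hπ'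
    set κ' := Submodule.linearProjOfIsCompl KK W hW with hκ'
    set π : ↥T →ₗ[k] ↥T := W.subtype ∘ₗ π' with hπ
    set κ : ↥T →ₗ[k] ↥T := KK.subtype ∘ₗ κ' with hκ
    have hsum : κ + π = LinearMap.id := by
      apply LinearMap.ext; intro x
      exact Submodule.projection_add_projection_eq_self hW x
    have hθκ : θ ∘ₗ κ = 0 := by
      apply LinearMap.ext; intro x
      show θ (KK.subtype (κ' x)) = 0
      rw [← LinearMap.mem_ker (f := θ), hkerθ]
      exact (κ' x).2
    have hθπ : θ ∘ₗ π = θ := by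
      have h : θ ∘ₗ (κ + π) = θ := by rw [hsum, LinearMap.comp_id]
      rwa [LinearMap.comp_add, hθκ, zero_add] at h
    have hθW : Function.Injective (θ ∘ₗ W.subtype) := by
      intro a b hab
      have hd : θ (W.subtype a - W.subtype b) = 0 := by
        rw [map_sub, sub_eq_zero]
        exact hab
      have hm : W.subtype a - W.subtype b ∈ KK := by
        rw [← hkerθ]
        exact hd
      have h0 : W.subtype a - W.subtype b ∈ KK ⊓ W := ⟨hm, W.sub_mem a.2 b.2⟩
      rw [hW.inf_eq_bot, Submodule.mem_bot] at h0
      exact Subtype.ext (sub_eq_zero.mp h0)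
    -- decomposition of the identity
    have hdecid : TensorProduct.map κ LinearMap.id
        + (TensorProduct.map π κ + TensorProduct.map π π)
        = (LinearMap.id : ↥T ⊗[k] ↥T →ₗ[k] ↥T ⊗[k] ↥T) := by
      rw [← TensorProduct.map_add_right, hsum, ← TensorProduct.map_add_left, hsum,
        TensorProduct.map_id]
    -- the mixed-middle term vanishes
    have hππ : TensorProduct.map π π (dT t) = 0 := by
      have hfac : TensorProduct.map π π (dT t)
          = TensorProduct.map W.subtype W.subtype (TensorProduct.map π' π' (dT t)) := by
        have hcm2 : TensorProduct.map W.subtype W.subtype ∘ₗ TensorProduct.map π' π'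
            = TensorProduct.map π π := by
          rw [← TensorProduct.map_comp]
        rw [← hcm2]; rfl
      have hz : TensorProduct.map π' π' (dT t) = 0 := by
        haveI : Module.Free k ↥W := Module.Free.of_divisionRing k ↥W
        haveI : Module.Free k (C ⧸ E) := Module.Free.of_divisionRing k (C ⧸ E)
        apply TensorProduct.map_injective_of_flat_flat _ _ hθW hθW
        rw [map_zero, ← LinearMap.comp_apply, ← TensorProduct.map_comp,
          LinearMap.comp_assoc, ← hπ, hθπ]
        exact hx0
      rw [hfac, hz, map_zero]
    refine Submodule.mem_sup.2 ⟨TensorProduct.map κ LinearMap.id (dT t), ?_,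
      TensorProduct.map π κ (dT t) + TensorProduct.map π π (dT t), ?_, ?_⟩
    · refine ⟨TensorProduct.map κ' LinearMap.id (dT t), ?_⟩
      rw [← LinearMap.comp_apply, ← TensorProduct.map_comp, LinearMap.id_comp, ← hκ]
    · rw [hππ, add_zero]
      refine ⟨TensorProduct.map π κ' (dT t), ?_⟩
      rw [← LinearMap.comp_apply, ← TensorProduct.map_comp, LinearMap.id_comp, ← hκ]
    · have h := LinearMap.congr_fun hdecid (dT t)
      simpa using h
  exact ⟨dT, hdT, hcoideal, dQ, hdQ, hkerθ, hrangeθ, hθcoalg⟩
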